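/- Let M ∈ [0, 2) and β₀, β₁, β₂ ∈ ℝ with β₁ > 0 and β₂ > 0. Then the vector ξ_g = (√((M+1)/3), 0, 0, √((2−M)/3), 0) belongs to S_C(M), satisfies τ(ξ_g) = 0 and δ(ξ_g) = 0, and minimizes E_U over S_C(M): E_U(ξ_g) ≤ E_U(ξ) for all ξ ∈ S_C(M), with minimum value E_U(ξ_g) = (1/2)(β₀ + β₁M²). -/

import Mathlib

noncomputable section

/-- τ for complex 5-vectors (ξ₂, ξ₁, ξ₀, ξ₋₁, ξ₋₂). -/
def tauC (z2 z1 z0 zm1 zm2 : ℂ) : ℂ :=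
  2 * ((starRingEnd ℂ) z2 * z1 + (starRingEnd ℂ) zm1 * zm2)
    + (Real.sqrt 6 : ℂ) * ((starRingEnd ℂ) z1 * z0 + (starRingEnd ℂ) z0 * zm1)

/-- δ for complex 5-vectors. -/
def deltaC (z2 z1 z0 zm1 zm2 : ℂ) : ℂ :=
  2 * z2 * zm2 - 2 * z1 * zm1 + z0 ^ 2

/-- F_z for complex 5-vectors. -/
def FzC (z2 z1 z0 zm1 zm2 : ℂ) : ℝ :=
  2 * (‖z2‖ ^ 2 - ‖zm2‖ ^ 2)
    + ‖z1‖ ^ 2 - ‖zm1‖ ^ 2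

/-- Membership in S_C(M): mass and magnetization constraints. -/
def memSC (M : ℝ) (z2 z1 z0 zm1 zm2 : ℂ) : Prop :=
  ‖z2‖ ^ 2 + ‖z1‖ ^ 2 + ‖z0‖ ^ 2
      + ‖zm1‖ ^ 2 + ‖zm2‖ ^ 2 = 1 ∧
  2 * ‖z2‖ ^ 2 + ‖z1‖ ^ 2
      - ‖zm1‖ ^ 2 - 2 * ‖zm2‖ ^ 2 = M

/-- The uniform energy E_U. -/
def EU (b0 b1 b2 M : ℝ) (z2 z1 z0 zm1 zm2 : ℂ) : ℝ :=
  (1 / 2) * (b1 * ‖tauC z2 z1 z0 zm1 zm2‖ ^ 2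
    + (b2 / 5) * ‖deltaC z2 z1 z0 zm1 zm2‖ ^ 2
    + b0 + b1 * M ^ 2)

theorem stmt11 (M b0 b1 b2 : ℝ) (hM0 : 0 ≤ M) (hM2 : M < 2)
    (hb1 : 0 < b1) (hb2 : 0 < b2) :
    memSC M ((Real.sqrt ((M + 1) / 3) : ℝ) : ℂ) 0 0
        ((Real.sqrt ((2 - M) / 3) : ℝ) : ℂ) 0 ∧
    tauC ((Real.sqrt ((M + 1) / 3) : ℝ) : ℂ) 0 0
        ((Real.sqrt ((2 - M) / 3) : ℝ) : ℂ) 0 = 0 ∧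
    deltaC ((Real.sqrt ((M + 1) / 3) : ℝ) : ℂ) 0 0
        ((Real.sqrt ((2 - M) / 3) : ℝ) : ℂ) 0 = 0 ∧
    (∀ z2 z1 z0 zm1 zm2 : ℂ, memSC M z2 z1 z0 zm1 zm2 →
      EU b0 b1 b2 M ((Real.sqrt ((M + 1) / 3) : ℝ) : ℂ) 0 0
          ((Real.sqrt ((2 - M) / 3) : ℝ) : ℂ) 0
        ≤ EU b0 b1 b2 M z2 z1 z0 zm1 zm2) ∧
    EU b0 b1 b2 M ((Real.sqrt ((M + 1) / 3) : ℝ) : ℂ) 0 0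
        ((Real.sqrt ((2 - M) / 3) : ℝ) : ℂ) 0
      = (1 / 2) * (b0 + b1 * M ^ 2) := by

  have h1 : (0:ℝ) ≤ (M + 1) / 3 := by linarith
  have h2 : (0:ℝ) ≤ (2 - M) / 3 := by linarith
  have ha : ‖((Real.sqrt ((M + 1) / 3) : ℝ) : ℂ)‖ ^ 2 = (M + 1) / 3 := by
    rw [Complex.norm_real, Real.norm_eq_abs, sq_abs, Real.sq_sqrt h1]
  have hb : ‖((Real.sqrt ((2 - M) / 3) : ℝ) : ℂ)‖ ^ 2 = (2 - M) / 3 := by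
    rw [Complex.norm_real, Real.norm_eq_abs, sq_abs, Real.sq_sqrt h2]
  have htau : tauC ((Real.sqrt ((M + 1) / 3) : ℝ) : ℂ) 0 0
      ((Real.sqrt ((2 - M) / 3) : ℝ) : ℂ) 0 = 0 := by
    simp [tauC]
  have hdelta : deltaC ((Real.sqrt ((M + 1) / 3) : ℝ) : ℂ) 0 0
      ((Real.sqrt ((2 - M) / 3) : ℝ) : ℂ) 0 = 0 := by
    simp [deltaC]
  have hval : EU b0 b1 b2 M ((Real.sqrt ((M + 1) / 3) : ℝ) : ℂ) 0 0
      ((Real.sqrt ((2 - M) / 3) : ℝ) : ℂ) 0 = (1 / 2) * (b0 + b1 * M ^ 2) := by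
    rw [EU, htau, hdelta]; simp
  refine ⟨⟨?_, ?_⟩, htau, hdelta, ?_, hval⟩
  · simp only [ha, hb, norm_zero]; ring
  · simp only [ha, hb, norm_zero]; ring
  · intro z2 z1 z0 zm1 zm2 _
    rw [hval, EU]
    have t1 : 0 ≤ b1 * ‖tauC z2 z1 z0 zm1 zm2‖ ^ 2 :=
      mul_nonneg hb1.le (sq_nonneg _)
    have t2 : 0 ≤ (b2 / 5) * ‖deltaC z2 z1 z0 zm1 zm2‖ ^ 2 :=
      mul_nonneg (by positivity) (sq_nonneg _)
    linarith
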